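/- The bus graph constructed from a PARTITION instance ⟨A, s⟩ (central bus B* of length (1/2)·Σ s(a) − 1; for each a ∈ A a bus B_a of length s(a) − 1 joined to B* by s(a) connectors) is realizable on the grid if and only if A can be partitioned into A' and A∖A' with Σ_{a∈A'} s(a) = Σ_{a∉A'} s(a). -/

import Mathlib

/-- An axis-parallel closed grid segment. `coord` is the fixed coordinate
(the y-coordinate if horizontal, the x-coordinate if vertical), and the
segment spans from `lo` to `hi` in the other coordinate. -/
structure GridSeg where
  horiz : Bool
  coord : ℤ
  lo : ℤ
  hi : ℤ

/-- The set of grid points covered by a grid segment. -/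
def GridSeg.pts (s : GridSeg) : Set (ℤ × ℤ) :=
  if s.horiz then {p | p.2 = s.coord ∧ s.lo ≤ p.1 ∧ p.1 ≤ s.hi}
  else {p | p.1 = s.coord ∧ s.lo ≤ p.2 ∧ p.2 ≤ s.hi}

/-- The foot of the perpendicular from a point to the line of a grid segment. -/
def foot (c : ℤ × ℤ) (s : GridSeg) : ℤ × ℤ :=
  if s.horiz then (c.1, s.coord) else (s.coord, c.2)

/-- The closed segment from `c` to its perpendicular foot on the line of `s`. -/
def edgePts (c : ℤ × ℤ) (s : GridSeg) : Set (ℤ × ℤ) :=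
  if s.horiz then {p | p.1 = c.1 ∧ min c.2 s.coord ≤ p.2 ∧ p.2 ≤ max c.2 s.coord}
  else {p | p.2 = c.2 ∧ min c.1 s.coord ≤ p.1 ∧ p.1 ≤ max c.1 s.coord}

/-- A grid realization of a bus graph: buses are axis-parallel closed grid
segments, connectors are grid points, and each edge is drawn as a straight
segment from the connector, perpendicular to the bus it joins, containing no
other bus or connector; buses and connectors are pairwise non-intersecting. -/
structure Realization {B C : Type} (adj : C → Finset B) where
  bus : B → GridSeg
  conn : C → ℤ × ℤ
  bus_disjoint : ∀ b b' : B, b ≠ b' → Disjoint (bus b).pts (bus b').pts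
  conn_inj : Function.Injective conn
  conn_off_bus : ∀ (c : C) (b : B), conn c ∉ (bus b).pts
  edge_foot : ∀ c : C, ∀ b ∈ adj c, foot (conn c) (bus b) ∈ (bus b).pts
  edge_avoids_bus : ∀ c : C, ∀ b ∈ adj c, ∀ b' : B,
    ∀ p ∈ edgePts (conn c) (bus b), p ∈ (bus b').pts → b' = b
  edge_avoids_conn : ∀ c : C, ∀ b ∈ adj c, ∀ c' : C,
    conn c' ∈ edgePts (conn c) (bus b) → c' = c

def GridSeg.flip (g : GridSeg) : GridSeg := ⟨!g.horiz, g.coord, g.lo, g.hi⟩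

lemma mem_pts_flip (g : GridSeg) (p : ℤ × ℤ) : p ∈ g.flip.pts ↔ p.swap ∈ g.pts := by
  obtain ⟨h, c, l, u⟩ := g
  cases h <;> simp [GridSeg.flip, GridSeg.pts, Prod.swap] <;> tauto

lemma foot_flip (p : ℤ × ℤ) (g : GridSeg) : foot p.swap g.flip = (foot p g).swap := by
  obtain ⟨h, c, l, u⟩ := g
  cases h <;> simp [GridSeg.flip, foot, Prod.swap]

lemma mem_edgePts_flip (c p : ℤ × ℤ) (g : GridSeg) :
    p ∈ edgePts c.swap g.flip ↔ p.swap ∈ edgePts c g := by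
  obtain ⟨h, co, l, u⟩ := g
  cases h <;> simp [GridSeg.flip, edgePts, Prod.swap] <;> tauto

def Realization.flip {B C : Type} {adj : C → Finset B} (R : Realization adj) :
    Realization adj where
  bus b := (R.bus b).flip
  conn c := (R.conn c).swap
  bus_disjoint b b' h := by
    have h2 := R.bus_disjoint b b' h
    rw [Set.disjoint_left] at h2 ⊢
    intro p hp hp'
    exact h2 ((mem_pts_flip _ _).mp hp) ((mem_pts_flip _ _).mp hp')
  conn_inj c c' h := R.conn_inj (by
    have := congrArg Prod.swap h
    simpa using this)
  conn_off_bus c b h := R.conn_off_bus c b ((mem_pts_flip _ _).mp h)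
  edge_foot c b hb := by
    have h := R.edge_foot c b hb
    rw [foot_flip, mem_pts_flip, Prod.swap_swap]
    exact h
  edge_avoids_bus c b hb b' p hp hp' :=
    R.edge_avoids_bus c b hb b' p.swap
      ((mem_edgePts_flip _ _ _).mp hp)
      ((mem_pts_flip _ _).mp hp')
  edge_avoids_conn c b hb c' h :=
    R.edge_avoids_conn c b hb c' (by
      have h2 := (mem_edgePts_flip (R.conn c) ((R.conn c').swap) (R.bus b)).mp h
      simpa using h2)


lemma mem_pts_horiz {g : GridSeg} (h : g.horiz = true) (p : ℤ × ℤ) :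
    p ∈ g.pts ↔ p.2 = g.coord ∧ g.lo ≤ p.1 ∧ p.1 ≤ g.hi := by
  simp [GridSeg.pts, h]

lemma mem_pts_vert {g : GridSeg} (h : g.horiz = false) (p : ℤ × ℤ) :
    p ∈ g.pts ↔ p.1 = g.coord ∧ g.lo ≤ p.2 ∧ p.2 ≤ g.hi := by
  simp [GridSeg.pts, h]

lemma mem_edge_horiz {g : GridSeg} (h : g.horiz = true) (c p : ℤ × ℤ) :
    p ∈ edgePts c g ↔ p.1 = c.1 ∧ min c.2 g.coord ≤ p.2 ∧ p.2 ≤ max c.2 g.coord := by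
  simp [edgePts, h]

lemma mem_edge_vert {g : GridSeg} (h : g.horiz = false) (c p : ℤ × ℤ) :
    p ∈ edgePts c g ↔ p.2 = c.2 ∧ min c.1 g.coord ≤ p.1 ∧ p.1 ≤ max c.1 g.coord := by
  simp [edgePts, h]

lemma forward_horiz
    {α : Type} [Fintype α] [DecidableEq α]
    (s : α → ℕ) (hs : ∀ a, 2 ≤ s a) (T : ℕ)
    (htot : ∑ a, s a = 2 * T)
    (R : Realization (fun c : (a : α) × Fin (s a) =>
        ({some c.1, none} : Finset (Option α))))
    (hh : (R.bus none).horiz = true)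
    (hlenstar : (R.bus none).hi - (R.bus none).lo = (T : ℤ) - 1)
    (hlen : ∀ a : α, (R.bus (some a)).hi - (R.bus (some a)).lo = (s a : ℤ) - 1) :
    ∃ A' : Finset α, ∑ a ∈ A', s a = ∑ a ∈ A'ᶜ, s a := by
  classical
  have hadj1 : ∀ c : (a : α) × Fin (s a), none ∈ ({some c.1, none} : Finset (Option α)) := by simp
  have hadj2 : ∀ c : (a : α) × Fin (s a), some c.1 ∈ ({some c.1, none} : Finset (Option α)) := by simp
  set Y := (R.bus none).coord with hY
  have hmemB0 : ∀ p : ℤ × ℤ, p ∈ (R.bus none).pts ↔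
      p.2 = Y ∧ (R.bus none).lo ≤ p.1 ∧ p.1 ≤ (R.bus none).hi := by
    intro p; simp [GridSeg.pts, hh, hY]
  have hedgeB0 : ∀ c p : ℤ × ℤ, p ∈ edgePts c (R.bus none) ↔
      p.1 = c.1 ∧ min c.2 Y ≤ p.2 ∧ p.2 ≤ max c.2 Y := by
    intro c p; simp [edgePts, hh, hY]
  have hfoot0 : ∀ c : (a : α) × Fin (s a), (R.bus none).lo ≤ (R.conn c).1 ∧ (R.conn c).1 ≤ (R.bus none).hi := by
    intro c
    have h := R.edge_foot c none (hadj1 c)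
    rw [hmemB0] at h
    simp only [foot, hh, if_true] at h
    exact h.2
  have hyne : ∀ c : (a : α) × Fin (s a), (R.conn c).2 ≠ Y := by
    intro c hy
    exact R.conn_off_bus c none ((hmemB0 _).mpr ⟨hy, (hfoot0 c).1, (hfoot0 c).2⟩)
  have hbetween : ∀ c c' : (a : α) × Fin (s a), (R.conn c').1 = (R.conn c).1 →
      min (R.conn c).2 Y ≤ (R.conn c').2 → (R.conn c').2 ≤ max (R.conn c).2 Y → c' = c := by
    intro c c' h1 h2 h3
    exact R.edge_avoids_conn c none (hadj1 c) c' ((hedgeB0 _ _).mpr ⟨h1, h2, h3⟩)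
  have hinjx : ∀ c c' : (a : α) × Fin (s a), (R.conn c).1 = (R.conn c').1 →
      ((R.conn c).2 < Y ↔ (R.conn c').2 < Y) → c = c' := by
    intro c c' hx hsd
    have e1 := hyne c
    have e2 := hyne c'
    rcases le_total (R.conn c).2 (R.conn c').2 with h | h
    · by_cases hA : (R.conn c).2 < Y
      · exact (hbetween c c' hx.symm (by omega) (by omega)).symm
      · exact hbetween c' c hx (by omega) (by omega)
    · by_cases hA : (R.conn c').2 < Y
      · exact hbetween c' c hx (by omega) (by omega)
      · exact (hbetween c c' hx.symm (by omega) (by omega)).symm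
  -- sidedness
  have hside : ∀ (a : α) (i j : Fin (s a)),
      Y < (R.conn ⟨a, i⟩).2 → Y < (R.conn ⟨a, j⟩).2 := by
    intro a i j hi
    have hlena := hlen a
    cases hB : (R.bus (some a)).horiz
    · -- vertical bus B_a
      have hyb : ∀ k : Fin (s a), (R.bus (some a)).lo ≤ (R.conn ⟨a, k⟩).2 ∧
          (R.conn ⟨a, k⟩).2 ≤ (R.bus (some a)).hi := by
        intro k
        have h := R.edge_foot ⟨a, k⟩ (some a) (hadj2 ⟨a, k⟩)
        simp only [foot, hB, GridSeg.pts, Bool.false_eq_true, if_false] at h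
        exact h.2
      by_cases hcross : (R.bus (some a)).lo ≤ Y ∧ Y ≤ (R.bus (some a)).hi
      · exfalso
        have hXout : ¬((R.bus none).lo ≤ (R.bus (some a)).coord ∧
            (R.bus (some a)).coord ≤ (R.bus none).hi) := by
          intro h
          refine Set.disjoint_left.mp (R.bus_disjoint (some a) none (by simp))
            (show ((R.bus (some a)).coord, Y) ∈ (R.bus (some a)).pts from ?_)
            ((hmemB0 _).mpr ⟨rfl, h.1, h.2⟩)
          rw [mem_pts_vert hB]
          exact ⟨rfl, hcross.1, hcross.2⟩
        have hyinj : ∀ k l : Fin (s a), (R.conn ⟨a, k⟩).2 = (R.conn ⟨a, l⟩).2 → k = l := by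
          intro k l hyy
          have hf1 := hfoot0 ⟨a, k⟩
          have hf2 := hfoot0 ⟨a, l⟩
          have hX : (R.bus (some a)).coord < (R.bus none).lo ∨
              (R.bus none).hi < (R.bus (some a)).coord := by omega
          have hmemE : ∀ k l : Fin (s a),
              (R.conn ⟨a, l⟩).2 = (R.conn ⟨a, k⟩).2 →
              min (R.conn ⟨a, k⟩).1 (R.bus (some a)).coord ≤ (R.conn ⟨a, l⟩).1 →
              (R.conn ⟨a, l⟩).1 ≤ max (R.conn ⟨a, k⟩).1 (R.bus (some a)).coord →
              k = l := by
            intro k l h1 h2 h3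
            have := R.edge_avoids_conn ⟨a, k⟩ (some a) (hadj2 ⟨a, k⟩) ⟨a, l⟩ (by
              rw [mem_edge_vert hB]
              exact ⟨h1, h2, h3⟩)
            simpa using this.symm
          rcases le_total (R.conn ⟨a, k⟩).1 (R.conn ⟨a, l⟩).1 with h | h
          · rcases hX with hX | hX
            · exact (hmemE l k hyy (by omega) (by omega)).symm
            · exact hmemE k l hyy.symm (by omega) (by omega)
          · rcases hX with hX | hX
            · exact hmemE k l hyy.symm (by omega) (by omega)
            · exact (hmemE l k hyy (by omega) (by omega)).symm
        have hcard : (Finset.univ : Finset (Fin (s a))).card ≤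
            ((Finset.Icc (R.bus (some a)).lo (R.bus (some a)).hi).erase Y).card := by
          apply Finset.card_le_card_of_injOn (fun k => (R.conn ⟨a, k⟩).2)
          · intro k _
            exact Finset.mem_erase.mpr ⟨hyne ⟨a, k⟩,
              Finset.mem_Icc.mpr ⟨(hyb k).1, (hyb k).2⟩⟩
          · intro k _ l _ h
            exact hyinj k l h
        rw [Finset.card_univ, Fintype.card_fin,
          Finset.card_erase_of_mem (Finset.mem_Icc.mpr ⟨hcross.1, hcross.2⟩),
          Int.card_Icc] at hcard
        have := hs a
        omega
      · have h1 := hyb i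
        have h2 := hyb j
        omega
    · -- horizontal bus B_a
      have hxb : ∀ k : Fin (s a), (R.bus (some a)).lo ≤ (R.conn ⟨a, k⟩).1 ∧
          (R.conn ⟨a, k⟩).1 ≤ (R.bus (some a)).hi := by
        intro k
        have h := R.edge_foot ⟨a, k⟩ (some a) (hadj2 ⟨a, k⟩)
        simp only [foot, hB, if_true, GridSeg.pts, Set.mem_setOf_eq] at h
        exact h.2
      have hkeypt : ∀ k : Fin (s a),
          ¬(min (R.conn ⟨a, k⟩).2 (R.bus (some a)).coord ≤ Y ∧
            Y ≤ max (R.conn ⟨a, k⟩).2 (R.bus (some a)).coord) := by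
        intro k hk
        have := R.edge_avoids_bus ⟨a, k⟩ (some a) (hadj2 ⟨a, k⟩) none
          ((R.conn ⟨a, k⟩).1, Y)
          (by rw [mem_edge_horiz hB]
              exact ⟨rfl, hk.1, hk.2⟩)
          ((hmemB0 _).mpr ⟨rfl, (hfoot0 ⟨a, k⟩).1, (hfoot0 ⟨a, k⟩).2⟩)
        cases this
      have hki := hkeypt i
      have hkj := hkeypt j
      have e1 := hyne ⟨a, i⟩
      have e2 := hyne ⟨a, j⟩
      omega
  -- counting
  have hcardC : Fintype.card ((a : α) × Fin (s a)) = 2 * T := by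
    rw [Fintype.card_sigma]
    simpa using htot
  set FA : Finset ((a : α) × Fin (s a)) := Finset.univ.filter (fun c => Y < (R.conn c).2) with hFA
  set FB : Finset ((a : α) × Fin (s a)) := Finset.univ.filter (fun c => (R.conn c).2 < Y) with hFB
  have hicc : (Finset.Icc (R.bus none).lo (R.bus none).hi).card = T := by
    rw [Int.card_Icc]; omega
  have hFAle : FA.card ≤ T := by
    rw [← hicc]
    apply Finset.card_le_card_of_injOn (fun c => (R.conn c).1)
    · intro c _
      exact Finset.mem_Icc.mpr ⟨(hfoot0 c).1, (hfoot0 c).2⟩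
    · intro c hc c' hc' h
      simp only [hFA, Finset.coe_filter, Finset.mem_univ, true_and,
        Set.mem_setOf_eq] at hc hc'
      exact hinjx c c' h (by omega)
  have hFBle : FB.card ≤ T := by
    rw [← hicc]
    apply Finset.card_le_card_of_injOn (fun c => (R.conn c).1)
    · intro c _
      exact Finset.mem_Icc.mpr ⟨(hfoot0 c).1, (hfoot0 c).2⟩
    · intro c hc c' hc' h
      simp only [hFB, Finset.coe_filter, Finset.mem_univ, true_and,
        Set.mem_setOf_eq] at hc hc'
      exact hinjx c c' h (by omega)
  have hFAB : FA.card + FB.card = 2 * T := by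
    have hFBeq : FB = Finset.univ.filter (fun c => ¬ Y < (R.conn c).2) := by
      ext c
      have := hyne c
      simp only [hFB, Finset.mem_filter, Finset.mem_univ, true_and]
      omega
    rw [hFBeq, hFA, Finset.card_filter_add_card_filter_not,
      Finset.card_univ, hcardC]
  have hFAcard : FA.card = T := by omega
  set A' : Finset α := Finset.univ.filter
    (fun a => Y < (R.conn ⟨a, ⟨0, by have := hs a; omega⟩⟩).2) with hA'
  have hFAeq : FA = A'.sigma (fun a => (Finset.univ : Finset (Fin (s a)))) := by
    ext ⟨a, i⟩
    simp only [hFA, hA', Finset.mem_filter, Finset.mem_univ, true_and,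
      Finset.mem_sigma, and_true]
    constructor
    · intro h; exact hside a i _ h
    · intro h; exact hside a _ i h
  have hsumA' : ∑ a ∈ A', s a = T := by
    rw [← hFAcard, hFAeq, Finset.card_sigma]
    simp
  refine ⟨A', ?_⟩
  have htotal := Finset.sum_add_sum_compl A' s
  omega

lemma backward_partition
    {α : Type} [Fintype α] [DecidableEq α]
    (s : α → ℕ) (T : ℕ)
    (htot : ∑ a, s a = 2 * T) (A' : Finset α)
    (hA : ∑ a ∈ A', s a = ∑ a ∈ A'ᶜ, s a) :
    (∃ R : Realization (fun c : (a : α) × Fin (s a) =>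
        ({some c.1, none} : Finset (Option α))),
      (R.bus none).hi - (R.bus none).lo = (T : ℤ) - 1 ∧
      ∀ a : α, (R.bus (some a)).hi - (R.bus (some a)).lo = (s a : ℤ) - 1) := by
  classical
  have hT : ∑ a ∈ A', s a = T := by
    have := Finset.sum_add_sum_compl A' s
    omega
  set r : α → ℕ := fun a => ((Fintype.equivFin α) a : ℕ) with hr
  have hrinj : Function.Injective r := fun a b h =>
    (Fintype.equivFin α).injective (Fin.ext h)
  set S : α → Finset α := fun a => if a ∈ A' then A' else A'ᶜ with hS
  have hmemS : ∀ a, a ∈ S a := by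
    intro a; by_cases h : a ∈ A' <;> simp [hS, h]
  have hsumS : ∀ a, ∑ b ∈ S a, s b = T := by
    intro a; by_cases h : a ∈ A' <;> simp only [hS, h, if_pos, if_neg, if_true, if_false]
    · exact hT
    · omega
  set base : α → ℕ := fun a => ∑ b ∈ (S a).filter (fun b => r b < r a), s b with hbase
  have hnotmem : ∀ a, a ∉ (S a).filter (fun b => r b < r a) := by
    intro a h; simp at h
  have hbase_le : ∀ a, base a + s a ≤ T := by
    intro a
    have hsub : insert a ((S a).filter (fun b => r b < r a)) ⊆ S a := by
      intro x hx
      rcases Finset.mem_insert.mp hx with h | h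
      · exact h ▸ hmemS a
      · exact (Finset.mem_filter.mp h).1
    have h2 := Finset.sum_le_sum_of_subset (f := s) hsub
    rw [Finset.sum_insert (hnotmem a), hsumS a] at h2
    have h3 : s a + base a ≤ T := h2
    omega
  have horder : ∀ a b, (a ∈ A' ↔ b ∈ A') → r a < r b → base a + s a ≤ base b := by
    intro a b hm hlt
    have hSS : S a = S b := by
      have hpe : (a ∈ A') = (b ∈ A') := propext hm
      simp only [hS]; simp only [hpe]
    have hsub : insert a ((S a).filter (fun b => r b < r a)) ⊆ (S a).filter (fun x => r x < r b) := by
      intro x hx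
      rcases Finset.mem_insert.mp hx with h | h
      · subst h; exact Finset.mem_filter.mpr ⟨hmemS x, hlt⟩
      · have := Finset.mem_filter.mp h
        exact Finset.mem_filter.mpr ⟨this.1, this.2.trans hlt⟩
    have h2 := Finset.sum_le_sum_of_subset (f := s) hsub
    rw [Finset.sum_insert (hnotmem a)] at h2
    calc base a + s a = s a + base a := by omega
      _ ≤ ∑ x ∈ (S a).filter (fun x => r x < r b), s x := h2
      _ = base b := by simp only [hbase]; rw [hSS]
  have hdisj : ∀ a b, (a ∈ A' ↔ b ∈ A') → a ≠ b →
      base a + s a ≤ base b ∨ base b + s b ≤ base a := by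
    intro a b hm hne
    rcases lt_trichotomy (r a) (r b) with h | h | h
    · exact Or.inl (horder a b hm h)
    · exact absurd (hrinj h) hne
    · exact Or.inr (horder b a hm.symm h)
  have hkey : ∀ (a b : α) (i : Fin (s a)) (j : Fin (s b)), (a ∈ A' ↔ b ∈ A') →
      (base a : ℤ) + (i : ℤ) = (base b : ℤ) + (j : ℤ) →
      (⟨a, i⟩ : (a : α) × Fin (s a)) = ⟨b, j⟩ := by
    intro a b i j hm hx
    by_cases hab : a = b
    · subst hab
      have : i = j := by
        have h1 := i.isLt; have h2 := j.isLt
        exact Fin.ext (by omega)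
      rw [this]
    · exfalso
      have := hdisj a b hm hab
      have h1 := i.isLt; have h2 := j.isLt
      omega
  set sg : α → ℤ := fun a => if a ∈ A' then 1 else -1 with hsg
  refine ⟨⟨fun o => match o with
      | none => ⟨true, 0, 0, (T : ℤ) - 1⟩
      | some a => ⟨true, 2 * sg a, (base a : ℤ), (base a : ℤ) + (s a : ℤ) - 1⟩,
    fun c => ((base c.1 : ℤ) + (c.2 : ℤ), sg c.1), ?_, ?_, ?_, ?_, ?_, ?_⟩, by simp, by intro a; simp; ring⟩
  · -- bus_disjoint
    intro b b' hne
    rw [Set.disjoint_left]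
    intro p hp hp'
    match b, b' with
    | none, none => exact hne rfl
    | none, some a =>
      simp [GridSeg.pts] at hp hp'
      by_cases h : a ∈ A' <;> simp [hsg, h] at hp' <;> omega
    | some a, none =>
      simp [GridSeg.pts] at hp hp'
      by_cases h : a ∈ A' <;> simp [hsg, h] at hp <;> omega
    | some a, some b2 =>
      have hab : a ≠ b2 := fun h => hne (by rw [h])
      simp [GridSeg.pts] at hp hp'
      by_cases h : a ∈ A' <;> by_cases h2 : b2 ∈ A' <;>
        simp [hsg, h, h2] at hp hp' <;>
        [skip; omega; omega; skip] <;>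
        · have := hdisj a b2 (by tauto) hab; omega
  · -- conn_inj
    intro c c' h
    obtain ⟨a, i⟩ := c; obtain ⟨b, j⟩ := c'
    simp only [Prod.mk.injEq] at h
    have hm : a ∈ A' ↔ b ∈ A' := by
      by_cases h1 : a ∈ A' <;> by_cases h2 : b ∈ A' <;> simp [hsg, h1, h2] at h <;> tauto
    exact hkey a b i j hm h.1
  · -- conn_off_bus
    intro c b
    obtain ⟨a, i⟩ := c
    match b with
    | none =>
      simp [GridSeg.pts]
      intro h
      by_cases h1 : a ∈ A' <;> simp [hsg, h1] at h
    | some b2 =>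
      simp [GridSeg.pts]
      intro h
      by_cases h1 : a ∈ A' <;> by_cases h2 : b2 ∈ A' <;> simp [hsg, h1, h2] at h <;> omega
  · -- edge_foot
    intro c b hb
    obtain ⟨a, i⟩ := c
    simp only [Finset.mem_insert, Finset.mem_singleton] at hb
    have hi := i.isLt
    have hbl := hbase_le a
    rcases hb with hb | hb <;> subst hb <;> simp [foot, GridSeg.pts] <;> omega
  · -- edge_avoids_bus
    intro c b hb b' p hp hp'
    obtain ⟨a, i⟩ := c
    simp only [Finset.mem_insert, Finset.mem_singleton] at hb
    rcases hb with hb | hb <;> subst hb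
    · -- edge to some a
      match b' with
      | none =>
        exfalso
        simp [edgePts, GridSeg.pts] at hp hp'
        by_cases h1 : a ∈ A' <;> simp [hsg, h1] at hp <;> omega
      | some b2 =>
        simp [edgePts, GridSeg.pts] at hp hp'
        by_cases hab : b2 = a
        · rw [hab]
        · exfalso
          by_cases h1 : a ∈ A' <;> by_cases h2 : b2 ∈ A' <;>
            simp [hsg, h1, h2] at hp hp' <;>
            [skip; omega; omega; skip] <;>
            · have := hdisj a b2 (by tauto) (fun h => hab h.symm)
              have hi := i.isLt
              omega
    · -- edge to none
      match b' with
      | none => rfl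
      | some b2 =>
        exfalso
        simp [edgePts, GridSeg.pts] at hp hp'
        by_cases h1 : a ∈ A' <;> by_cases h2 : b2 ∈ A' <;>
          simp [hsg, h1, h2] at hp hp' <;> omega
  · -- edge_avoids_conn
    intro c b hb c' h
    obtain ⟨a, i⟩ := c
    obtain ⟨b2, j⟩ := c'
    simp only [Finset.mem_insert, Finset.mem_singleton] at hb
    rcases hb with hb | hb <;> subst hb <;>
      simp [edgePts] at h
    · have hm : b2 ∈ A' ↔ a ∈ A' := by
        by_cases h1 : a ∈ A' <;> by_cases h2 : b2 ∈ A' <;>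
          simp [hsg, h1, h2] at h <;> tauto
      exact hkey b2 a j i hm h.1
    · have hm : b2 ∈ A' ↔ a ∈ A' := by
        by_cases h1 : a ∈ A' <;> by_cases h2 : b2 ∈ A' <;>
          simp [hsg, h1, h2] at h <;> tauto
      exact hkey b2 a j i hm h.1

/-- The bus graph constructed from a PARTITION instance ⟨A, s⟩ (a central bus
B* of length (1/2)·Σ s(a) − 1 = T − 1, and for each a ∈ A a bus B_a of length
s(a) − 1 joined to B* by s(a) connectors) is realizable on the grid iff A can
be partitioned into two parts of equal total size. -/
theorem partition_reduction_correct
    {α : Type} [Fintype α] [DecidableEq α]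
    (s : α → ℕ) (hs : ∀ a, 2 ≤ s a) (T : ℕ)
    (htot : ∑ a, s a = 2 * T) :
    (∃ R : Realization (fun c : (a : α) × Fin (s a) =>
        ({some c.1, none} : Finset (Option α))),
      (R.bus none).hi - (R.bus none).lo = (T : ℤ) - 1 ∧
      ∀ a : α, (R.bus (some a)).hi - (R.bus (some a)).lo = (s a : ℤ) - 1)
    ↔ (∃ A' : Finset α, ∑ a ∈ A', s a = ∑ a ∈ A'ᶜ, s a) := by
  constructor
  · rintro ⟨R, h1, h2⟩
    by_cases hh : (R.bus none).horiz = true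
    · exact forward_horiz s hs T htot R hh h1 h2
    · refine forward_horiz s hs T htot R.flip ?_ h1 h2
      have hf : (R.bus none).horiz = false := by
        revert hh; cases (R.bus none).horiz <;> simp
      show (!(R.bus none).horiz) = true
      rw [hf]
      rfl
  · rintro ⟨A', hA⟩
    exact backward_partition s T htot A' hA
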